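/- Let (A, q) be a metric group of exponent n generated by its isotropic elements, and let (B, r) be a pre-metric group. Let B̃ = ⟨ y ∈ B : r(y)^n = 1 ⟩. Then the subgroup A ⊕ B̃ of the orthogonal direct sum (A ⊕ B, q ⊕ r) is generated by its isotropic elements. -/

import Mathlib

/-- The bilinear form associated to a quadratic form `q : A → kˣ`. -/
def Bform {A k : Type*} [AddCommGroup A] [Field k] (q : A → kˣ) (x y : A) : kˣ :=
  q (x + y) * (q x * q y)⁻¹

/-- `q : A → kˣ` is a quadratic form: `q(-x) = q(x)` and its associated form is bilinear. -/
def IsQuadraticForm {A k : Type*} [AddCommGroup A] [Field k] (q : A → kˣ) : Prop :=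
  (∀ x, q (-x) = q x) ∧ ∀ x y z, Bform q (x + y) z = Bform q x z * Bform q y z

/-- Non-degeneracy of the bilinear form associated to `q`. -/
def Nondeg {A k : Type*} [AddCommGroup A] [Field k] (q : A → kˣ) : Prop :=
  ∀ x, (∀ y, Bform q x y = 1) → x = 0

section Aux

variable {A k : Type*} [AddCommGroup A] [Field k] {q : A → kˣ}

lemma B_symm (q : A → kˣ) (x y : A) : Bform q x y = Bform q y x := by
  simp [Bform, add_comm, mul_comm]

lemma B_zero_left (hq : IsQuadraticForm q) (z : A) : Bform q 0 z = 1 := by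
  have h := hq.2 0 0 z
  rw [add_zero] at h
  exact mul_eq_right.mp h.symm

/-- The additive hom given by the bilinear form with second argument fixed. -/
def Bhom (hq : IsQuadraticForm q) (z : A) : A →+ Additive kˣ where
  toFun a := Additive.ofMul (Bform q a z)
  map_zero' := by
    show Additive.ofMul (Bform q 0 z) = 0
    rw [B_zero_left hq]; rfl
  map_add' a b := by
    show Additive.ofMul (Bform q (a + b) z) =
      Additive.ofMul (Bform q a z) + Additive.ofMul (Bform q b z)
    rw [hq.2 a b z]; rfl

lemma B_nsmul_left (hq : IsQuadraticForm q) (c : ℕ) (x z : A) :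
    Bform q (c • x) z = Bform q x z ^ c := by
  simpa [Bhom] using congrArg Additive.toMul (map_nsmul (Bhom hq z) c x)

lemma B_zsmul_left (hq : IsQuadraticForm q) (c : ℤ) (x z : A) :
    Bform q (c • x) z = Bform q x z ^ c := by
  simpa [Bhom] using congrArg Additive.toMul (map_zsmul (Bhom hq z) c x)

lemma B_neg_left (hq : IsQuadraticForm q) (x z : A) :
    Bform q (-x) z = (Bform q x z)⁻¹ := by
  simpa using B_zsmul_left hq (-1) x z

lemma q_zero (hq : IsQuadraticForm q) : q 0 = 1 := by
  have h := B_zero_left hq 0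
  unfold Bform at h
  rw [add_zero] at h
  have h2 : (q 0)⁻¹ = 1 := by rw [← h]; group
  exact inv_eq_one.mp h2

lemma q_add (x y : A) : q (x + y) = q x * q y * Bform q x y := by
  have h : ∀ a b : kˣ, b * (a * b⁻¹) = a := fun a b => by
    rw [mul_comm a, ← mul_assoc, mul_inv_cancel, one_mul]
  rw [Bform]
  exact (h _ _).symm

lemma B_self (hq : IsQuadraticForm q) (x : A) : Bform q x x = q x * q x := by
  have h := q_add (q := q) x (-x)
  rw [add_neg_cancel, q_zero hq, hq.1 x, B_symm q x (-x), B_neg_left hq x x] at h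
  have h' : q x * q x / Bform q x x = 1 := by rw [div_eq_mul_inv]; exact h.symm
  exact (div_eq_one.mp h').symm

lemma q_nsmul_one (hq : IsQuadraticForm q) {x : A} (hx : q x = 1) (c : ℕ) :
    q (c • x) = 1 := by
  induction c with
  | zero => simpa using q_zero hq
  | succ c ih =>
    rw [succ_nsmul, q_add (q := q), ih, hx, B_nsmul_left hq, B_self hq, hx]
    simp

lemma q_zsmul_one (hq : IsQuadraticForm q) {x : A} (hx : q x = 1) (c : ℤ) :
    q (c • x) = 1 := by
  rcases Int.natAbs_eq c with h | h
  · rw [h, natCast_zsmul]; exact q_nsmul_one hq hx _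
  · rw [h, neg_zsmul, natCast_zsmul, hq.1]; exact q_nsmul_one hq hx _

end Aux

section Fin

variable {A k : Type*} [AddCommGroup A] [Finite A] [Field k] {q : A → kˣ} {n : ℕ}

lemma B_pow_exp (hq : IsQuadraticForm q) (hn : AddMonoid.exponent A = n) (x z : A) :
    Bform q x z ^ n = 1 := by
  have h : n • x = 0 := by rw [← hn]; exact AddMonoid.exponent_nsmul_eq_zero x
  rw [← B_nsmul_left hq, h, B_zero_left hq]

lemma exists_pair (hq : IsQuadraticForm q) (hnd : Nondeg q)
    (hn : AddMonoid.exponent A = n)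
    (hgen : AddSubgroup.closure {x : A | q x = 1} = ⊤)
    (d : ℕ) (hd : ¬ n ∣ d) :
    ∃ x y, q x = 1 ∧ q y = 1 ∧ Bform q x y ^ d ≠ 1 := by
  by_contra hcon
  push_neg at hcon
  apply hd
  have step1 : ∀ a z, q z = 1 → Bform q a z ^ d = 1 := by
    intro a
    let H : AddSubgroup A :=
      { carrier := {a : A | ∀ z, q z = 1 → Bform q a z ^ d = 1}
        zero_mem' := fun z _ => by rw [B_zero_left hq, one_pow]
        add_mem' := fun {a b} ha hb z hz => by
          rw [hq.2 a b z, mul_pow, ha z hz, hb z hz, one_mul]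
        neg_mem' := fun {a} ha z hz => by
          rw [B_neg_left hq, inv_pow, ha z hz, inv_one] }
    have hle : AddSubgroup.closure {x : A | q x = 1} ≤ H :=
      (AddSubgroup.closure_le H).mpr (fun x hx z hz => hcon x z hx hz)
    exact hle (by rw [hgen]; trivial)
  have step2 : ∀ a z, Bform q a z ^ d = 1 := by
    intro a z
    let H : AddSubgroup A :=
      { carrier := {z : A | ∀ a, Bform q a z ^ d = 1}
        zero_mem' := fun a => by rw [B_symm, B_zero_left hq, one_pow]
        add_mem' := fun {z w} hz hw a => by
          rw [B_symm, hq.2 z w a, mul_pow, B_symm q z a, B_symm q w a, hz a, hw a, one_mul]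
        neg_mem' := fun {z} hz a => by
          rw [B_symm, B_neg_left hq, inv_pow, B_symm q z a, hz a, inv_one] }
    have hle : AddSubgroup.closure {x : A | q x = 1} ≤ H :=
      (AddSubgroup.closure_le H).mpr (fun x hx a => step1 a x hx)
    exact hle (by rw [hgen]; trivial : z ∈ _) a
  have hzero : ∀ a : A, d • a = 0 := fun a =>
    hnd (d • a) (fun z => by rw [B_nsmul_left hq, step2 a z])
  rw [← hn]
  exact AddMonoid.exponent_dvd_of_forall_nsmul_eq_zero hzero

end Fin

lemma key_surj {A k : Type*} [AddCommGroup A] [Finite A] [Field k] (q : A → kˣ)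
    (hq : IsQuadraticForm q) (hnd : Nondeg q) (n : ℕ)
    (hn : AddMonoid.exponent A = n)
    (hgen : AddSubgroup.closure {x : A | q x = 1} = ⊤) :
    ∀ ζ : kˣ, ζ ^ n = 1 → ∃ x, q x = ζ := by
  have hn0 : n ≠ 0 := by rw [← hn]; exact AddMonoid.exponent_ne_zero_of_finite
  have claim : ∀ m, m ∣ n → (∀ p : ℕ, p.Prime → p ∣ m → p ^ (n.factorization p) ∣ m) →
      ∀ ζ : kˣ, ζ ^ m = 1 → ∃ z, q z = ζ ∧ ∀ b, Bform q z b ^ m = 1 := by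
    intro m
    induction m using Nat.strong_induction_on with
    | _ m ih =>
    intro hmn hsat ζ hζ
    rcases eq_or_ne m 1 with rfl | hm1
    · refine ⟨0, ?_, fun b => by rw [B_zero_left hq, one_pow]⟩
      rw [q_zero hq]
      rw [pow_one] at hζ
      exact hζ.symm
    · obtain ⟨p, hp, hpm⟩ := Nat.exists_prime_and_dvd hm1
      haveI : Fact p.Prime := ⟨hp⟩
      have hm0 : m ≠ 0 := fun h => hn0 (Nat.eq_zero_of_zero_dvd (h ▸ hmn))
      have hpn : p ∣ n := hpm.trans hmn
      have hE1 : 0 < n.factorization p := hp.factorization_pos_of_dvd hn0 hpn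
      set E := n.factorization p with hE
      set P := p ^ E with hP
      have hPm : P ∣ m := hsat p hp hpm
      obtain ⟨m', hmm'⟩ := hPm
      have hP1 : 1 < P := Nat.one_lt_pow (by omega) hp.one_lt
      have hm'0 : m' ≠ 0 := by rintro rfl; rw [mul_zero] at hmm'; exact hm0 hmm'
      have hm'lt : m' < m := by
        rw [hmm']
        exact (Nat.lt_mul_iff_one_lt_left (Nat.pos_of_ne_zero hm'0)).mpr hP1
      have hpm' : ¬ p ∣ m' := by
        intro hdvd
        refine Nat.pow_succ_factorization_not_dvd hn0 hp ?_
        rw [← hE, pow_succ]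
        exact dvd_trans (mul_dvd_mul_left P hdvd) (hmm' ▸ hmn)
      have hcop : Nat.Coprime P m' :=
        Nat.Coprime.pow_left _ (hp.coprime_iff_not_dvd.mpr hpm')
      have hsat' : ∀ s : ℕ, s.Prime → s ∣ m' → s ^ (n.factorization s) ∣ m' := by
        intro s hs hsm'
        have hsm : s ∣ m := hsm'.trans ⟨P, by rw [hmm', mul_comm]⟩
        have h1 : s ^ (n.factorization s) ∣ m := hsat s hs hsm
        have hsp : s ≠ p := by rintro rfl; exact hpm' hsm'
        have hcop2 : Nat.Coprime (s ^ n.factorization s) P :=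
          Nat.Coprime.pow _ _ ((Nat.coprime_primes hs hp).mpr hsp)
        exact hcop2.dvd_of_dvd_mul_left (hmm' ▸ h1)
      have hm'n : m' ∣ n := dvd_trans ⟨P, by rw [hmm', mul_comm]⟩ hmn
      obtain ⟨u, v, huv⟩ := Nat.isCoprime_iff_coprime.mpr hcop
      have hζm : ζ ^ (m : ℤ) = 1 := by rw [zpow_natCast]; exact hζ
      have hzmul : ∀ t : ℤ, ζ ^ (t * (m : ℤ)) = 1 := fun t => by
        rw [mul_comm, zpow_mul, hζm, one_zpow]
      set ζ₁ := ζ ^ (v * (m' : ℤ)) with hζ₁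
      set ζ₂ := ζ ^ (u * (P : ℤ)) with hζ₂
      have hcastm : (P : ℤ) * (m' : ℤ) = (m : ℤ) := by exact_mod_cast hmm'.symm
      have hζ₁P : ζ₁ ^ P = 1 := by
        rw [hζ₁, ← zpow_natCast, ← zpow_mul]
        have heq : v * (m' : ℤ) * (P : ℤ) = v * (m : ℤ) := by rw [← hcastm]; ring
        rw [heq]; exact hzmul v
      have hζ₂m' : ζ₂ ^ m' = 1 := by
        rw [hζ₂, ← zpow_natCast, ← zpow_mul]
        have heq : u * (P : ℤ) * (m' : ℤ) = u * (m : ℤ) := by rw [← hcastm]; ring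
        rw [heq]; exact hzmul u
      have hζ12 : ζ₁ * ζ₂ = ζ := by
        rw [hζ₁, hζ₂, ← zpow_add]
        have heq : v * (m' : ℤ) + u * (P : ℤ) = 1 := by linarith [huv]
        rw [heq, zpow_one]
      obtain ⟨z₂, hqz₂, hB₂⟩ := ih m' hm'lt hm'n hsat' ζ₂ hζ₂m'
      obtain ⟨c0, hc0⟩ : P ∣ n := dvd_trans ⟨m', hmm'⟩ hmn
      have hc00 : c0 ≠ 0 := by rintro rfl; rw [mul_zero] at hc0; exact hn0 hc0
      obtain ⟨E', hEE⟩ : ∃ E', E = E' + 1 := ⟨E - 1, by omega⟩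
      have hd0 : 0 < p ^ E' * c0 := Nat.mul_pos (pow_pos hp.pos E') (Nat.pos_of_ne_zero hc00)
      have hd : ¬ n ∣ p ^ E' * c0 := by
        intro hdvd
        have h2 : n = p * (p ^ E' * c0) := by rw [hc0, hP, hEE]; ring
        have h3 := Nat.le_of_dvd hd0 hdvd
        nlinarith [hp.two_le]
      obtain ⟨x, y, hx, hy, hxy⟩ := exists_pair hq hnd hn hgen (p ^ E' * c0) hd
      set g : kˣ := Bform q x y ^ c0 with hg
      have hBn : ∀ a b : A, Bform q a b ^ (n : ℤ) = 1 := fun a b => by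
        rw [zpow_natCast]; exact B_pow_exp hq hn a b
      have hgfin : g ^ p ^ (E' + 1) = 1 := by
        rw [hg, ← pow_mul]
        have heq : c0 * p ^ (E' + 1) = n := by rw [hc0, hP, hEE]; ring
        rw [heq]; exact B_pow_exp hq hn x y
      have hgnot : ¬ g ^ p ^ E' = 1 := by
        rw [hg, ← pow_mul, mul_comm]; exact hxy
      have horder : orderOf g = p ^ (E' + 1) := orderOf_eq_prime_pow hgnot hgfin
      have hgprim : IsPrimitiveRoot g P := by
        rw [hP, hEE, ← horder]; exact IsPrimitiveRoot.orderOf g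
      haveI : NeZero P := ⟨by omega⟩
      have hgkprim : IsPrimitiveRoot (g : k) P := IsPrimitiveRoot.coe_units_iff.mpr hgprim
      have hζ₁k : (ζ₁ : k) ^ P = 1 := by
        have hcoe := congrArg Units.val hζ₁P
        simpa using hcoe
      obtain ⟨t, htP, hgt⟩ := hgkprim.eq_pow_of_pow_eq_one hζ₁k
      have hgt' : g ^ t = ζ₁ := Units.ext (by push_cast; exact hgt)
      have hpc0 : ¬ p ∣ c0 := by
        intro hdvd
        refine Nat.pow_succ_factorization_not_dvd hn0 hp ?_
        rw [← hE, pow_succ, hc0]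
        exact mul_dvd_mul_left P hdvd
      have hcop3 : Nat.Coprime P c0 := Nat.Coprime.pow_left _ (hp.coprime_iff_not_dvd.mpr hpc0)
      obtain ⟨a₂, b₂, hab₂⟩ := Nat.isCoprime_iff_coprime.mpr hcop3
      set c : ℤ := (t : ℤ) * b₂ * (c0 : ℤ) with hc'
      set z₁ := (c0 : ℤ) • x + c • y with hz₁
      have hcastn : (P : ℤ) * (c0 : ℤ) = (n : ℤ) := by exact_mod_cast hc0.symm
      have hBz₁ : ∀ b : A, Bform q z₁ b = Bform q x b ^ (c0 : ℤ) * Bform q y b ^ c := by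
        intro b
        rw [hz₁, hq.2, B_zsmul_left hq, B_zsmul_left hq]
      have hBz₁P : ∀ b : A, Bform q z₁ b ^ P = 1 := by
        intro b
        rw [hBz₁ b, mul_pow, ← zpow_natCast (Bform q x b ^ (c0 : ℤ)),
          ← zpow_natCast (Bform q y b ^ c), ← zpow_mul, ← zpow_mul]
        have e1 : (c0 : ℤ) * (P : ℤ) = (n : ℤ) := by rw [← hcastn]; ring
        have e2 : c * (P : ℤ) = (n : ℤ) * ((t : ℤ) * b₂) := by rw [hc', ← hcastn]; ring
        rw [e1, e2, zpow_mul, hBn y b, one_zpow, hBn x b, one_mul]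
      have hqz₁ : q z₁ = ζ₁ := by
        rw [hz₁, q_add (q := q), q_zsmul_one hq hx, q_zsmul_one hq hy, one_mul, one_mul]
        have hBB : Bform q ((c0 : ℤ) • x) (c • y) = Bform q x y ^ ((c0 : ℤ) * c) := by
          rw [B_zsmul_left hq, B_symm q x (c • y), B_zsmul_left hq, B_symm q y x,
            ← zpow_mul, mul_comm c]
        rw [hBB]
        have hsplit : (c0 : ℤ) * c = ((c0 * t : ℕ) : ℤ) + (n : ℤ) * (-((t : ℤ) * a₂)) := by
          push_cast
          linear_combination ((t : ℤ) * (c0 : ℤ)) * hab₂ - ((t : ℤ) * a₂) * hcastn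
        rw [hsplit, zpow_add, zpow_mul, hBn x y, one_zpow, mul_one, zpow_natCast, pow_mul]
        rw [← hg]
        exact hgt'
      have hw : Bform q z₁ z₂ = 1 := by
        have h1 : Bform q z₁ z₂ ^ (P : ℤ) = 1 := by rw [zpow_natCast]; exact hBz₁P z₂
        have h2 : Bform q z₁ z₂ ^ (m' : ℤ) = 1 := by
          rw [zpow_natCast, B_symm]; exact hB₂ z₁
        have heq : (P : ℤ) * u + (m' : ℤ) * v = 1 := by linarith [huv]
        calc Bform q z₁ z₂ = Bform q z₁ z₂ ^ ((P : ℤ) * u + (m' : ℤ) * v) := by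
              rw [heq, zpow_one]
          _ = 1 := by rw [zpow_add, zpow_mul, h1, zpow_mul, h2, one_zpow, one_zpow, one_mul]
      refine ⟨z₁ + z₂, ?_, ?_⟩
      · rw [q_add (q := q), hqz₁, hqz₂, hw, mul_one, hζ12]
      · intro b
        rw [hq.2, mul_pow]
        have g1 : Bform q z₁ b ^ (P * m') = 1 := by rw [pow_mul, hBz₁P b, one_pow]
        have g2 : Bform q z₂ b ^ (P * m') = 1 := by rw [mul_comm, pow_mul, hB₂ b, one_pow]
        rw [hmm', g1, g2, one_mul]
  intro ζ hζ
  obtain ⟨z, hz, -⟩ := claim n dvd_rfl (fun p _ _ => Nat.ordProj_dvd n p) ζ hζ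
  exact ⟨z, hz⟩


/-- If `(A, q)` is an isotropically generated metric group of exponent `n` and `(B, r)`
a pre-metric group with `B̃ = ⟨ y : r(y)^n = 1 ⟩`, then the subgroup `A ⊕ B̃` of the
orthogonal sum `(A ⊕ B, q ⊕ r)` is generated by its isotropic elements. -/
theorem stmt9 {k : Type*} [Field k] [CharZero k] [IsAlgClosed k]
    {A B : Type*} [AddCommGroup A] [Finite A] [AddCommGroup B] [Finite B]
    (q : A → kˣ) (r : B → kˣ)
    (hq : IsQuadraticForm q) (hnd : Nondeg q) (hr : IsQuadraticForm r)
    (n : ℕ) (hn : AddMonoid.exponent A = n)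
    (hgen : AddSubgroup.closure {x : A | q x = 1} = ⊤) :
    AddSubgroup.closure
        {v : A × B |
          v ∈ (⊤ : AddSubgroup A).prod (AddSubgroup.closure {y : B | r y ^ n = 1}) ∧
            q v.1 * r v.2 = 1} =
      (⊤ : AddSubgroup A).prod (AddSubgroup.closure {y : B | r y ^ n = 1}) := by

  set Bt := AddSubgroup.closure {y : B | r y ^ n = 1} with hBt
  set S := {v : A × B | v ∈ (⊤ : AddSubgroup A).prod Bt ∧ q v.1 * r v.2 = 1} with hS
  apply le_antisymm
  · exact (AddSubgroup.closure_le _).mpr (fun v hv => hv.1)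
  · have key' := key_surj q hq hnd n hn hgen
    have claimA : ∀ a : A, ((a, 0) : A × B) ∈ AddSubgroup.closure S := by
      intro a
      have hsub : AddSubgroup.closure {x : A | q x = 1} ≤
          (AddSubgroup.closure S).comap (AddMonoidHom.inl A B) := by
        refine (AddSubgroup.closure_le _).mpr (fun x hx => ?_)
        refine AddSubgroup.subset_closure ?_
        refine ⟨AddSubgroup.mem_prod.mpr ⟨trivial, Bt.zero_mem⟩, ?_⟩
        show q x * r 0 = 1
        rw [Set.mem_setOf_eq] at hx
        rw [hx, q_zero hr, one_mul]
      exact hsub (by rw [hgen]; trivial)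
    have claimB : ∀ b ∈ Bt, ((0, b) : A × B) ∈ AddSubgroup.closure S := by
      intro b hb
      have hsub : Bt ≤ (AddSubgroup.closure S).comap (AddMonoidHom.inr A B) := by
        rw [hBt]
        refine (AddSubgroup.closure_le _).mpr (fun y hy => ?_)
        rw [Set.mem_setOf_eq] at hy
        obtain ⟨x, hx⟩ := key' (r y)⁻¹ (by rw [inv_pow, hy, inv_one])
        have h1 : ((x, y) : A × B) ∈ AddSubgroup.closure S :=
          AddSubgroup.subset_closure
            ⟨AddSubgroup.mem_prod.mpr ⟨trivial, AddSubgroup.subset_closure hy⟩,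
              by show q x * r y = 1; rw [hx, inv_mul_cancel]⟩
        have h2 := claimA (-x)
        have h3 := AddSubgroup.add_mem _ h1 h2
        show ((0, y) : A × B) ∈ AddSubgroup.closure S
        have heq : ((x, y) : A × B) + (-x, 0) = (0, y) := by
          ext <;> simp
        rwa [heq] at h3
      exact hsub hb
    intro v hv
    have hv2 : v.2 ∈ Bt := (AddSubgroup.mem_prod.mp hv).2
    have h3 := AddSubgroup.add_mem _ (claimA v.1) (claimB v.2 hv2)
    have heq : ((v.1, 0) : A × B) + (0, v.2) = v := by ext <;> simp
    rwa [heq] at h3
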